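/- arXiv:2206.00836 — 7 statements merged into one kernel-verified Lean document; each statement's English description precedes it below -/
import Mathlib

section
/- The chromatic number of the graph F_n^s is at least ⌈n/a⌉, where n = as + b with a ≥ 2 and 0 ≤ b ≤ s-1. -/
/-- Cyclic distance `min (|x-y|, n - |x-y|)` on `ℤ/nℤ` for `x, y ∈ {1,…,n}`. -/
def cdist (n x y : ℕ) : ℕ := min (max x y - min x y) (n - (max x y - min x y))

/-- The graph `F_n^s` on vertex set `[n] = {1,…,n}`: distinct `x, y` are adjacent
iff their cyclic distance is `< s`. -/
def Fgraph (n s : ℕ) : SimpleGraph ℕ :=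
  SimpleGraph.fromRel (fun x y => x ∈ Finset.Icc 1 n ∧ y ∈ Finset.Icc 1 n ∧ cdist n x y < s)

/-- Any "independent" set (pairwise cyclic distance ≥ s) inside `[1, n]` has at most `a`
elements, when `n = a*s + b` with `b ≤ s - 1`. -/
lemma indep_card_le (s a b n : ℕ) (hs : 2 ≤ s) (ha : 2 ≤ a) (hb : b ≤ s - 1)
    (hn : n = a * s + b) (T : Finset ℕ) (hT : T ⊆ Finset.Icc 1 n)
    (hI : ∀ x ∈ T, ∀ y ∈ T, x ≠ y → s ≤ cdist n x y) : T.card ≤ a := by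
  by_contra hc
  push_neg at hc
  obtain ⟨U, hUT, hU⟩ := Finset.exists_subset_card_eq (s := T) (n := a + 1) hc
  set e := U.orderIsoOfFin hU with he
  set g : Fin (a + 1) → ℕ := fun i => (e i : ℕ) with hg
  have hmem : ∀ i : Fin (a + 1), g i ∈ T := fun i => hUT (e i).2
  have hmono : StrictMono g := fun i j hij => Subtype.coe_lt_coe.mpr (e.strictMono hij)
  have hmemI : ∀ i : Fin (a + 1), 1 ≤ g i ∧ g i ≤ n := by
    intro i
    have := hT (hmem i)
    simpa [Finset.mem_Icc] using this
  have key : ∀ (i : ℕ) (h : i < a + 1),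
      g ⟨0, Nat.succ_pos a⟩ + i * s ≤ g ⟨i, h⟩ := by
    intro i
    induction i with
    | zero => intro h; simp
    | succ i ih =>
      intro h
      have h' : i < a + 1 := Nat.lt_of_succ_lt h
      have hlt : g ⟨i, h'⟩ < g ⟨i + 1, h⟩ := hmono (by simp [Fin.lt_def])
      have hd := hI _ (hmem ⟨i, h'⟩) _ (hmem ⟨i + 1, h⟩) (Nat.ne_of_lt hlt)
      unfold cdist at hd
      have hih := ih h'
      have hmul : (i + 1) * s = i * s + s := Nat.succ_mul i s
      omega
  have hka := key a (Nat.lt_succ_self a)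
  have h0a : g ⟨0, Nat.succ_pos a⟩ < g ⟨a, Nat.lt_succ_self a⟩ := by
    apply hmono
    simp [Fin.lt_def]
    omega
  have hd := hI _ (hmem ⟨0, Nat.succ_pos a⟩) _ (hmem ⟨a, Nat.lt_succ_self a⟩)
    (Nat.ne_of_lt h0a)
  unfold cdist at hd
  have h1 := hmemI ⟨0, Nat.succ_pos a⟩
  have h2 := hmemI ⟨a, Nat.lt_succ_self a⟩
  omega

/-- With `n = a*s + b`, `0 ≤ b ≤ s-1`, `a ≥ 2`: the chromatic number of
`F_n^s` is at least `⌈n/a⌉ = (n + a - 1) / a`. -/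
theorem stmt_4 (s a b n : ℕ) (hs : 2 ≤ s) (ha : 2 ≤ a) (hb : b ≤ s - 1)
    (hn : n = a * s + b) :
    (((n + a - 1) / a : ℕ) : ℕ∞) ≤ (Fgraph n s).chromaticNumber := by
  rw [SimpleGraph.chromaticNumber]
  refine le_iInf₂ fun m hm => ?_
  obtain ⟨C⟩ := hm
  -- counting: each color class meets [1, n] in at most a vertices
  have hcount : (Finset.Icc 1 n).card ≤ a * ((Finset.Icc 1 n).image C).card := by
    apply Finset.card_le_mul_card_image
    intro c _
    apply indep_card_le s a b n hs ha hb hn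
    · exact Finset.filter_subset _ _
    · intro x hx y hy hxy
      simp only [Finset.mem_filter] at hx hy
      have hnadj : ¬ (Fgraph n s).Adj x y := by
        intro hadj
        exact C.valid hadj (hx.2.trans hy.2.symm)
      rw [Fgraph, SimpleGraph.fromRel_adj] at hnadj
      push_neg at hnadj
      have := hnadj hxy
      rcases this with ⟨hp, _⟩
      have := hp hx.1 hy.1
      omega
  have himg : ((Finset.Icc 1 n).image C).card ≤ m := by
    calc ((Finset.Icc 1 n).image C).card ≤ Fintype.card (Fin m) :=
          Finset.card_le_univ _ |>.trans (by simp)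
      _ = m := Fintype.card_fin m
  have hcard : (Finset.Icc 1 n).card = n := by simp
  have hnam : n ≤ a * m := by
    calc n = (Finset.Icc 1 n).card := hcard.symm
      _ ≤ a * ((Finset.Icc 1 n).image C).card := hcount
      _ ≤ a * m := Nat.mul_le_mul_left a himg
  rw [Nat.cast_le]
  rw [Nat.div_le_iff_le_mul_add_pred (by omega)]
  omega
end

section
/- The graph F_n^s admits a proper vertex coloring with ⌈n/a⌉ colors, where n = as + b with a ≥ 2 and 0 ≤ b ≤ s-1; hence χ(F_n^s) ≤ ⌈n/a⌉. -/
def fstart (n a i : ℕ) : ℕ := (i * n + a - 1) / a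
def fidx (n a t : ℕ) : ℕ := t * a / n
def fcol (n a t : ℕ) : ℕ := t - fstart n a (fidx n a t)

lemma fstart_mono (n a : ℕ) {i j : ℕ} (h : i ≤ j) : fstart n a i ≤ fstart n a j :=
  Nat.div_le_div_right (by
    have := Nat.mul_le_mul_right n h
    omega)

lemma n_le_a_mul_k (n a : ℕ) (ha : 0 < a) : n ≤ a * ((n + a - 1) / a) := by
  have h1 : a * ((n + a - 1) / a) + (n + a - 1) % a = n + a - 1 := Nat.div_add_mod _ _
  have h2 : (n + a - 1) % a < a := Nat.mod_lt _ ha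
  generalize a * ((n + a - 1) / a) = A at *
  omega

lemma fstart_le_self (n a : ℕ) (t : ℕ) (ha : 0 < a) : fstart n a (fidx n a t) ≤ t := by
  unfold fstart fidx
  have h1 : (t * a / n) * n ≤ t * a := Nat.div_mul_le_self _ _
  calc (t * a / n * n + a - 1) / a ≤ (t * a + a - 1) / a := Nat.div_le_div_right (by omega)
    _ = (a * t + (a - 1)) / a := by rw [Nat.mul_comm]; congr 1; omega
    _ = t + (a - 1) / a := Nat.mul_add_div ha _ _
    _ = t := by rw [Nat.div_eq_of_lt (by omega)]; omega

lemma lt_fstart_succ (n a : ℕ) (t : ℕ) (ha : 0 < a) (hn : 0 < n) :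
    t < fstart n a (fidx n a t + 1) := by
  unfold fstart fidx
  set i := t * a / n with hi
  have h1 : t * a < (i + 1) * n := by
    have h2 : n * i + t * a % n = t * a := Nat.div_add_mod _ _
    have h3 : t * a % n < n := Nat.mod_lt _ hn
    calc t * a = n * i + t * a % n := h2.symm
      _ < n * i + n := by omega
      _ = (i + 1) * n := by ring
  rw [Nat.lt_iff_add_one_le, Nat.le_div_iff_mul_le ha]
  have h4 : (t + 1) * a = t * a + a := by ring
  rw [h4]
  generalize t * a = X at h1 ⊢
  generalize (i + 1) * n = Y at h1 ⊢
  omega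

lemma fstart_add_s_le (n a s i : ℕ) (ha : 0 < a) (hsn : a * s ≤ n) :
    fstart n a i + s ≤ fstart n a (i + 1) := by
  unfold fstart
  calc (i * n + a - 1) / a + s = (i * n + a - 1 + a * s) / a := (Nat.add_mul_div_left _ _ ha).symm
    _ ≤ ((i + 1) * n + a - 1) / a := Nat.div_le_div_right (by
        have h : (i + 1) * n = i * n + n := by ring
        rw [h]
        generalize i * n = P
        generalize a * s = Q at hsn ⊢
        omega)

lemma fstart_succ_le (n a i : ℕ) (ha : 0 < a) :
    fstart n a (i + 1) ≤ fstart n a i + (n + a - 1) / a := by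
  unfold fstart
  have h1 : n ≤ a * ((n + a - 1) / a) := n_le_a_mul_k n a ha
  calc ((i + 1) * n + a - 1) / a ≤ (i * n + a - 1 + a * ((n + a - 1) / a)) / a :=
        Nat.div_le_div_right (by
          have h : (i + 1) * n = i * n + n := by ring
          rw [h]
          generalize i * n = P
          generalize a * ((n + a - 1) / a) = Q at h1 ⊢
          omega)
    _ = (i * n + a - 1) / a + (n + a - 1) / a := Nat.add_mul_div_left _ _ ha

lemma fstart_top (n a : ℕ) (ha : 0 < a) : fstart n a a = n := by
  unfold fstart
  have : a * n + a - 1 = a * n + (a - 1) := by omega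
  rw [this, Nat.mul_add_div ha, Nat.div_eq_of_lt (by omega), Nat.add_zero]

lemma fidx_lt (n a t : ℕ) (ha : 0 < a) (ht : t < n) : fidx n a t < a := by
  unfold fidx
  have hn : 0 < n := by omega
  rw [Nat.div_lt_iff_lt_mul hn]
  calc t * a < n * a := by exact (Nat.mul_lt_mul_right ha).mpr ht
    _ = a * n := Nat.mul_comm _ _

lemma fcol_lt (n a t : ℕ) (ha : 0 < a) (hn : 0 < n) : fcol n a t < (n + a - 1) / a := by
  unfold fcol
  have h1 := fstart_le_self n a t ha
  have h2 := lt_fstart_succ n a t ha hn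
  have h3 := fstart_succ_le n a (fidx n a t) ha
  omega

lemma cdist_comm (n x y : ℕ) : cdist n x y = cdist n y x := by
  unfold cdist; rw [Nat.max_comm, Nat.min_comm x y]

lemma key (n a s : ℕ) (ha : 0 < a) (hn : 0 < n) (hsn : a * s ≤ n)
    {x y : ℕ} (hx : 1 ≤ x) (hy : y ≤ n) (hxy : x < y)
    (hc : fcol n a (x - 1) = fcol n a (y - 1)) :
    s ≤ cdist n x y := by
  unfold fcol at hc
  set t := x - 1 with hT
  set u := y - 1 with hU
  have htu : t < u := by omega
  have hu : u < n := by omega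
  set i := fidx n a t with hi
  set j := fidx n a u with hj
  have hij : i ≤ j := Nat.div_le_div_right (Nat.mul_le_mul_right a htu.le)
  have h1 : fstart n a i ≤ t := fstart_le_self n a t ha
  have h2 : fstart n a j ≤ u := fstart_le_self n a u ha
  have hmain : s ≤ u - t ∧ u - t + s ≤ n := by
    rcases Nat.lt_or_ge i j with hlt | hge
    · have h3 : fstart n a i + s ≤ fstart n a (i + 1) := fstart_add_s_le n a s i ha hsn
      have h4 : fstart n a (i + 1) ≤ fstart n a j := fstart_mono n a hlt
      have h5 : fstart n a j + s ≤ fstart n a (j + 1) := fstart_add_s_le n a s j ha hsn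
      have h6 : fstart n a (j + 1) ≤ fstart n a a := fstart_mono n a (fidx_lt n a u ha hu)
      have h7 : fstart n a a = n := fstart_top n a ha
      omega
    · have : i = j := by omega
      rw [this] at hc h1
      omega
  have hmax : max x y = y := Nat.max_eq_right hxy.le
  have hmin : min x y = x := Nat.min_eq_left hxy.le
  unfold cdist
  rw [hmax, hmin]
  have hyx : y - x = u - t := by omega
  rw [hyx]
  exact le_min hmain.1 (by omega)

/-- With `n = a*s + b`, `0 ≤ b ≤ s-1`, `a ≥ 2`: `F_n^s` has a proper vertex
coloring with `⌈n/a⌉ = (n + a - 1) / a` colors; hence `χ(F_n^s) ≤ ⌈n/a⌉`. -/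
theorem stmt_5 (s a b n : ℕ) (hs : 2 ≤ s) (ha : 2 ≤ a) (hb : b ≤ s - 1)
    (hn : n = a * s + b) :
    (∃ f : ℕ → Fin ((n + a - 1) / a),
      ∀ x y : ℕ, (Fgraph n s).Adj x y → f x ≠ f y) ∧
    (Fgraph n s).chromaticNumber ≤ (((n + a - 1) / a : ℕ) : ℕ∞) := by
  have ha0 : 0 < a := by omega
  have has : 4 ≤ a * s := Nat.mul_le_mul ha hs
  have hn0 : 0 < n := by omega
  have hsn : a * s ≤ n := by omega
  have hfl : ∀ t : ℕ, fcol n a t < (n + a - 1) / a := by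
    intro t; exact fcol_lt n a t ha0 hn0
  set f : ℕ → Fin ((n + a - 1) / a) := fun x => ⟨fcol n a (x - 1), hfl (x - 1)⟩ with hf
  have hproper : ∀ x y : ℕ, (Fgraph n s).Adj x y → f x ≠ f y := by
    intro x y hadj heq
    rw [Fgraph, SimpleGraph.fromRel_adj] at hadj
    obtain ⟨hne, h⟩ := hadj
    have hcd : x ∈ Finset.Icc 1 n ∧ y ∈ Finset.Icc 1 n ∧ cdist n x y < s := by
      rcases h with ⟨h1, h2, h3⟩ | ⟨h1, h2, h3⟩
      · exact ⟨h1, h2, h3⟩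
      · exact ⟨h2, h1, by rwa [cdist_comm]⟩
    obtain ⟨h1, h2, h3⟩ := hcd
    rw [Finset.mem_Icc] at h1 h2
    have hceq : fcol n a (x - 1) = fcol n a (y - 1) := congrArg Fin.val heq
    rcases hne.lt_or_gt with hlt | hlt
    · exact absurd (key n a s ha0 hn0 hsn h1.1 h2.2 hlt hceq) (by omega)
    · have := key n a s ha0 hn0 hsn h2.1 h1.2 hlt hceq.symm
      rw [cdist_comm] at this
      exact absurd this (by omega)
  refine ⟨⟨f, hproper⟩, ?_⟩
  have hcol : (Fgraph n s).Colorable ((n + a - 1) / a) :=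
    ⟨SimpleGraph.Coloring.mk f fun {v w} h => hproper v w h⟩
  exact hcol.chromaticNumber_le
end

section
/- Let s ≥ 4 and n = 3s - 1. Then the chromatic number of F_n^s equals ⌈(3s-1)/2⌉; in particular, for every integer r with s + 1 ≤ r ≤ s + ⌈(s-3)/2⌉ we have χ(F_n^s) > r and n ≥ 2r + 1. -/
lemma Fgraph_adj {n s x y : ℕ} :
    (Fgraph n s).Adj x y ↔ x ≠ y ∧ x ∈ Finset.Icc 1 n ∧ y ∈ Finset.Icc 1 n ∧ cdist n x y < s := by
  constructor
  · rintro ⟨hne, h | h⟩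
    · exact ⟨hne, h⟩
    · refine ⟨hne, h.2.1, h.1, ?_⟩
      have : cdist n x y = cdist n y x := by simp [cdist, max_comm, min_comm]
      rw [this]; exact h.2.2
  · rintro ⟨hne, h⟩
    exact ⟨hne, Or.inl h⟩

/-- The upper bound coloring. -/
lemma Fgraph_colorable (s : ℕ) (hs : 4 ≤ s) :
    (Fgraph (3 * s - 1) s).Colorable ((3 * s - 1 + 1) / 2) := by
  set n := 3 * s - 1 with hn
  set m := (3 * s - 1 + 1) / 2 with hm
  have hm1 : 1 ≤ m := by omega
  refine ⟨SimpleGraph.Coloring.mk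
    (fun x => ⟨if x ≤ m then x - 1 else if x ≤ n then x - 1 - m else 0, by
      split_ifs <;> omega⟩) ?_⟩
  intro x y hadj
  rw [Fgraph_adj] at hadj
  obtain ⟨hne, hx, hy, hd⟩ := hadj
  simp only [Finset.mem_Icc] at hx hy
  simp only [ne_eq, Fin.mk.injEq]
  intro hEq
  simp only [cdist, Nat.min_def, Nat.max_def] at hd
  split_ifs at hd hEq <;> omega

/-- Any three distinct vertices in `[1,n]` contain an adjacent pair. -/
lemma Fgraph_no_indep3 (s : ℕ) (hs : 4 ≤ s) {x y z : ℕ}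
    (hx : x ∈ Finset.Icc 1 (3 * s - 1)) (hy : y ∈ Finset.Icc 1 (3 * s - 1))
    (hz : z ∈ Finset.Icc 1 (3 * s - 1))
    (hxy : x ≠ y) (hxz : x ≠ z) (hyz : y ≠ z) :
    (Fgraph (3 * s - 1) s).Adj x y ∨ (Fgraph (3 * s - 1) s).Adj x z ∨
      (Fgraph (3 * s - 1) s).Adj y z := by
  by_contra h
  push_neg at h
  obtain ⟨h1, h2, h3⟩ := h
  rw [Fgraph_adj] at h1 h2 h3
  push_neg at h1 h2 h3
  have d1 := h1 hxy hx hy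
  have d2 := h2 hxz hx hz
  have d3 := h3 hyz hy hz
  simp only [Finset.mem_Icc] at hx hy hz
  simp only [cdist, Nat.min_def, Nat.max_def] at d1 d2 d3
  split_ifs at d1 d2 d3 <;> omega

lemma Fgraph_not_colorable (s : ℕ) (hs : 4 ≤ s) :
    ¬ (Fgraph (3 * s - 1) s).Colorable ((3 * s - 1 + 1) / 2 - 1) := by
  rintro ⟨C⟩
  set n := 3 * s - 1 with hn
  set k := (3 * s - 1 + 1) / 2 - 1 with hk
  have hmaps : ∀ a ∈ Finset.Icc 1 n, C a ∈ (Finset.univ : Finset (Fin k)) := by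
    intro a _; simp
  have hcard : (Finset.univ : Finset (Fin k)).card * 2 < (Finset.Icc 1 n).card := by
    simp [Nat.card_Icc]; omega
  obtain ⟨c, -, hc⟩ := Finset.exists_lt_card_fiber_of_mul_lt_card_of_maps_to hmaps hcard
  rw [Finset.two_lt_card_iff] at hc
  obtain ⟨x, y, z, hx, hy, hz, hxy, hxz, hyz⟩ := hc
  simp only [Finset.mem_filter] at hx hy hz
  have := Fgraph_no_indep3 s hs hx.1 hy.1 hz.1 hxy hxz hyz
  rcases this with h | h | h
  · exact C.valid h (hx.2.trans hy.2.symm)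
  · exact C.valid h (hx.2.trans hz.2.symm)
  · exact C.valid h (hy.2.trans hz.2.symm)

/-- For `s ≥ 4` and `n = 3s - 1`, `χ(F_n^s) = ⌈(3s-1)/2⌉`; in particular for
every `r` with `s + 1 ≤ r ≤ s + ⌈(s-3)/2⌉` we have `χ(F_n^s) > r` and
`n ≥ 2r + 1`. -/
theorem stmt_9 (s : ℕ) (hs : 4 ≤ s) :
    (Fgraph (3 * s - 1) s).chromaticNumber = (((3 * s - 1 + 1) / 2 : ℕ) : ℕ∞) ∧
    ∀ r : ℕ, s + 1 ≤ r → r ≤ s + (s - 3 + 1) / 2 →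
      ((r : ℕ∞) < (Fgraph (3 * s - 1) s).chromaticNumber ∧ 2 * r + 1 ≤ 3 * s - 1) := by
  have hub : (Fgraph (3 * s - 1) s).chromaticNumber ≤ (((3 * s - 1 + 1) / 2 : ℕ) : ℕ∞) :=
    (Fgraph_colorable s hs).chromaticNumber_le
  have hlb : ¬ (Fgraph (3 * s - 1) s).chromaticNumber ≤ (((3 * s - 1 + 1) / 2 - 1 : ℕ) : ℕ∞) := by
    rw [SimpleGraph.chromaticNumber_le_iff_colorable]
    exact Fgraph_not_colorable s hs
  have hlb' : (((3 * s - 1 + 1) / 2 - 1 : ℕ) : ℕ∞) < (Fgraph (3 * s - 1) s).chromaticNumber :=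
    lt_of_not_ge hlb
  have heq : (Fgraph (3 * s - 1) s).chromaticNumber = (((3 * s - 1 + 1) / 2 : ℕ) : ℕ∞) := by
    refine le_antisymm hub ?_
    have h1 := Order.add_one_le_of_lt hlb'
    have h2 : (3 * s - 1 + 1) / 2 = ((3 * s - 1 + 1) / 2 - 1) + 1 := by omega
    rw [h2, Nat.cast_add, Nat.cast_one]
    exact h1
  refine ⟨heq, fun r hr1 hr2 => ⟨?_, by omega⟩⟩
  rw [heq]
  exact_mod_cast (by omega : r < (3 * s - 1 + 1) / 2)
end

section
/- Let s ≥ 2, k ≥ 2, and n = sk + 1. Then the chromatic number of F_n^s equals s + 1. -/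
lemma quot_lemma (s u v : ℕ) (hs : 0 < s) (h : u / s = v / s) (huv : u ≤ v) : v - u < s := by
  have h1 := Nat.div_add_mod u s
  have h2 := Nat.div_add_mod v s
  have h3 := Nat.mod_lt v hs
  rw [h] at h1
  generalize hw : s * (v / s) = w at h1 h2
  generalize u % s = r1 at h1
  generalize hv2 : v % s = r2 at h2 h3
  omega

lemma cdist_lt_of_lt {n x y : ℕ} (hxy : x < y) : cdist n x y = min (y - x) (n - (y - x)) := by
  unfold cdist
  rw [max_eq_right hxy.le, min_eq_left hxy.le]

-- Upper bound: a proper coloring with s+1 colors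
lemma colorable_upper (s k : ℕ) (hs : 2 ≤ s) (hk : 2 ≤ k) :
    (Fgraph (s * k + 1) s).Colorable (s + 1) := by
  set n := s * k + 1 with hn
  have hspos : 0 < s := by omega
  refine ⟨SimpleGraph.Coloring.mk
    (fun x => if x = n then ⟨s, by omega⟩ else ⟨(x - 1) % s, by
      have := Nat.mod_lt (x - 1) hspos; omega⟩) ?_⟩
  intro x y hadj
  rw [Fgraph, SimpleGraph.fromRel_adj] at hadj
  obtain ⟨hne, h⟩ := hadj
  have key : ∀ a b : ℕ, a < b → a ∈ Finset.Icc 1 n → b ∈ Finset.Icc 1 n →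
      cdist n a b < s →
      (if a = n then (⟨s, by omega⟩ : Fin (s+1)) else ⟨(a - 1) % s, by
        have := Nat.mod_lt (a - 1) hspos; omega⟩) ≠
      (if b = n then (⟨s, by omega⟩ : Fin (s+1)) else ⟨(b - 1) % s, by
        have := Nat.mod_lt (b - 1) hspos; omega⟩) := by
    intro a b hab ha hb hd
    simp only [Finset.mem_Icc] at ha hb
    have han : a ≠ n := by omega
    rw [if_neg han]
    by_cases hbn : b = n
    · rw [if_pos hbn]
      intro hcontra
      have h2 : (a - 1) % s = s := by
        have := congrArg Fin.val hcontra; simpa using this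
      have := Nat.mod_lt (a - 1) hspos
      omega
    · rw [if_neg hbn]
      intro hcontra
      have h2 : (a - 1) % s = (b - 1) % s := by
        have := congrArg Fin.val hcontra; simpa using this
      -- s divides b - a
      have hdvd : s ∣ (b - 1) - (a - 1) :=
        (Nat.modEq_iff_dvd' (by omega)).mp h2
      have heq : (b - 1) - (a - 1) = b - a := by omega
      rw [heq] at hdvd
      obtain ⟨m, hm⟩ := hdvd
      have hm1 : 1 ≤ m := by
        rcases Nat.eq_zero_or_pos m with h0 | h0
        · subst h0; simp at hm; omega
        · exact h0
      have hble : b ≤ n - 1 := by omega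
      have hmk : m + 1 ≤ k := by
        by_contra hc
        push_neg at hc
        have : s * k ≤ s * m := Nat.mul_le_mul_left s (by omega)
        omega
      have h3 : s * (m + 1) ≤ s * k := Nat.mul_le_mul_left s hmk
      have h4 : s * (m + 1) = s * m + s := by ring
      have h5 : s * 1 ≤ s * m := Nat.mul_le_mul_left s hm1
      rw [cdist_lt_of_lt hab] at hd
      omega
  rcases h with ⟨ha, hb, hd⟩ | ⟨hb, ha, hd⟩
  · rcases lt_or_gt_of_ne hne with h | h
    · exact key x y h ha hb hd
    · exact (key y x h hb ha (by rwa [cdist_comm])).symm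
  · rcases lt_or_gt_of_ne hne with h | h
    · exact key x y h ha hb (by rwa [cdist_comm])
    · exact (key y x h hb ha hd).symm

-- Lower bound: not colorable with s colors
lemma not_colorable_lower (s k : ℕ) (hs : 2 ≤ s) (hk : 2 ≤ k) :
    ¬ (Fgraph (s * k + 1) s).Colorable s := by
  set n := s * k + 1 with hn
  rintro ⟨C⟩
  have hcard : (Finset.Icc 1 n).card = n := by simp
  -- pigeonhole: some color used more than k times
  have hpigeon : ∃ c ∈ Finset.univ (α := Fin s), k <
      ((Finset.Icc 1 n).filter (fun x => C x = c)).card := by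
    apply Finset.exists_lt_card_fiber_of_mul_lt_card_of_maps_to
    · intro x _; exact Finset.mem_univ _
    · rw [hcard]
      have : (Finset.univ : Finset (Fin s)).card = s := by simp
      rw [this]; omega
  obtain ⟨c, -, hT⟩ := hpigeon
  set T := (Finset.Icc 1 n).filter (fun x => C x = c) with hTdef
  have hTne : T.Nonempty := Finset.card_pos.mp (by omega)
  have hTsub : ∀ x ∈ T, x ∈ Finset.Icc 1 n := fun x hx => (Finset.mem_filter.mp hx).1
  -- any two distinct elements of T have cdist ≥ s
  have hsep : ∀ x ∈ T, ∀ y ∈ T, x ≠ y → s ≤ cdist n x y := by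
    intro x hx y hy hxy
    by_contra hlt
    push_neg at hlt
    have hadj : (Fgraph n s).Adj x y := by
      rw [Fgraph, SimpleGraph.fromRel_adj]
      exact ⟨hxy, Or.inl ⟨hTsub x hx, hTsub y hy, hlt⟩⟩
    have := C.valid hadj
    have hcx := (Finset.mem_filter.mp hx).2
    have hcy := (Finset.mem_filter.mp hy).2
    rw [hcx, hcy] at this
    exact this rfl
  -- so real difference ≥ s
  have hdiff : ∀ x ∈ T, ∀ y ∈ T, x < y → s ≤ y - x := by
    intro x hx y hy hxy
    have := hsep x hx y hy hxy.ne
    rw [cdist_lt_of_lt hxy] at this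
    omega
  set a := T.min' hTne with ha
  set b := T.max' hTne with hb
  have haT : a ∈ T := T.min'_mem hTne
  have hbT : b ∈ T := T.max'_mem hTne
  have hab : a ≤ b := T.min'_le b hbT
  -- b - a ≤ n - s
  have hba : b - a ≤ n - s := by
    rcases eq_or_lt_of_le hab with h | h
    · omega
    · have := hsep a haT b hbT h.ne
      rw [cdist_lt_of_lt h] at this
      have hb1 : b ≤ n := (Finset.mem_Icc.mp (hTsub b hbT)).2
      have ha1 : 1 ≤ a := (Finset.mem_Icc.mp (hTsub a haT)).1
      omega
  -- injection t ↦ (t - a) / s into range k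
  have hinj : ∀ x ∈ T, ∀ y ∈ T, (x - a) / s = (y - a) / s → x = y := by
    intro x hx y hy hq
    by_contra hne
    rcases lt_or_gt_of_ne hne with h | h
    · have h1 := hdiff x hx y hy h
      have hax : a ≤ x := T.min'_le x hx
      have := quot_lemma s (x - a) (y - a) (by omega) hq (by omega)
      omega
    · have h1 := hdiff y hy x hx h
      have hay : a ≤ y := T.min'_le y hy
      have := quot_lemma s (y - a) (x - a) (by omega) hq.symm (by omega)
      omega
  have hmaps : ∀ x ∈ T, (x - a) / s ∈ Finset.range k := by
    intro x hx
    rw [Finset.mem_range]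
    have hax : a ≤ x := T.min'_le x hx
    have hxb : x ≤ b := T.le_max' x hx
    have h1 : x - a ≤ n - s := by omega
    rw [Nat.div_lt_iff_lt_mul (show 0 < s by omega)]
    have h2 : s ≤ s * k := Nat.le_mul_of_pos_right s (by omega)
    calc x - a ≤ n - s := h1
      _ < k * s := by rw [hn, Nat.mul_comm k s]; omega
  have hcard2 : T.card ≤ k := by
    have := Finset.card_le_card_of_injOn (fun x => (x - a) / s) hmaps
      (fun x hx y hy h => hinj x hx y hy h)
    simpa using this
  omega

/-- For `s ≥ 2`, `k ≥ 2` and `n = s*k + 1`, the chromatic number of `F_n^s`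
equals `s + 1`. -/
theorem stmt_11 (s k : ℕ) (hs : 2 ≤ s) (hk : 2 ≤ k) :
    (Fgraph (s * k + 1) s).chromaticNumber = ((s + 1 : ℕ) : ℕ∞) := by
  have hup := (colorable_upper s k hs hk).chromaticNumber_le
  have hlo := not_colorable_lower s k hs hk
  refine le_antisymm hup ?_
  by_contra h
  push_neg at h
  have hle : (Fgraph (s * k + 1) s).chromaticNumber ≤ (s : ℕ∞) := by
    have h' : (Fgraph (s * k + 1) s).chromaticNumber < (s : ℕ∞) + 1 := by
      push_cast at h ⊢; exact h
    exact Order.le_of_lt_add_one h'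
  exact hlo ((SimpleGraph.chromaticNumber_le_iff_colorable).mp hle)
end

section
/- Let r, s, l ≥ 2, n = ls(rs-1), and A = {ls, 2ls, ..., (rs-1)ls} ⊆ [n]. Let F be the hypergraph on [n] whose hyperedges are all s-element subsets of A together with all 2-element subsets {x,y} of [n] with min(|x-y|, n-|x-y|) < s. Then the s-colorability defect of F satisfies cd^s(F) ≥ r. -/
/-- The `s`-colorability defect of a hypergraph `H` on `[n]`: the minimum size of a
set `W ⊆ [n]` such that `[n] \ W` can be partitioned into `s` parts (the fibers of a
coloring `f`), none of which contains a hyperedge of `H`. -/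
noncomputable def cd (n s : ℕ) (H : Finset (Finset ℕ)) : ℕ :=
  sInf {k | ∃ W : Finset ℕ, W ⊆ Finset.Icc 1 n ∧ W.card = k ∧
    ∃ f : ℕ → Fin s, ∀ e ∈ H, ∀ c : Fin s,
      ¬ e ⊆ (Finset.Icc 1 n \ W).filter (fun v => f v = c)}

lemma cdist_add (n u d : ℕ) (hd : d + d ≤ n) : cdist n u (u + d) = d := by
  unfold cdist; omega

lemma cdist_wrap (n u : ℕ) (h1 : 1 ≤ u) (h : u + u ≤ n) : cdist n u n = u := by
  unfold cdist; omega

section steps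
variable (n s : ℕ) (f : ℕ → Fin s) (W : Finset ℕ) (hs : 2 ≤ s) (hn : 2 * s + 1 ≤ n)
  (hpair : ∀ x y, x ∈ Finset.Icc 1 n → y ∈ Finset.Icc 1 n → x ∉ W → y ∉ W → x ≠ y →
      cdist n x y < s → f x ≠ f y)

include hs hn hpair in
lemma step1 (x : ℕ) (hx1 : 1 ≤ x) (hxn : x + s ≤ n) (hcol : ∀ t, t ≤ s → x + t ∉ W) :
    f x = f (x + s) := by
  classical
  have hmem : ∀ t, t ≤ s → x + t ∈ Finset.Icc 1 n := by
    intro t ht; rw [Finset.mem_Icc]; omega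
  have key : ∀ i j, i ≤ s → j ≤ s → i < j → j - i < s → f (x + i) ≠ f (x + j) := by
    intro i j hi hj hij hd
    have hv : x + j = (x + i) + (j - i) := by omega
    have hc : cdist n (x + i) (x + j) = j - i := by
      rw [hv]; exact cdist_add n (x + i) (j - i) (by omega)
    exact hpair _ _ (hmem i hi) (hmem j hj) (hcol i hi) (hcol j hj) (by omega)
      (by rw [hc]; omega)
  set T : Finset (Fin s) := (Finset.Icc 1 (s - 1)).image (fun j => f (x + j)) with hT
  have hTcard : T.card = s - 1 := by
    rw [hT, Finset.card_image_of_injOn, Nat.card_Icc]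
    · omega
    · intro j hj j' hj' h
      simp only [Finset.coe_Icc, Set.mem_Icc] at hj hj'
      by_contra hne
      rcases Nat.lt_or_ge j j' with hlt | hge
      · exact key j j' (by omega) (by omega) hlt (by omega) h
      · exact key j' j (by omega) (by omega) (by omega) (by omega) h.symm
  have hfx : f x ∉ T := by
    rw [hT]; simp only [Finset.mem_image, Finset.mem_Icc]
    rintro ⟨j, ⟨hj1, hj2⟩, hj3⟩
    exact key 0 j (by omega) (by omega) (by omega) (by omega) (by simpa using hj3.symm)
  have hfxs : f (x + s) ∉ T := by
    rw [hT]; simp only [Finset.mem_image, Finset.mem_Icc]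
    rintro ⟨j, ⟨hj1, hj2⟩, hj3⟩
    exact key j s (by omega) le_rfl (by omega) (by omega) hj3
  have hcompl : Tᶜ.card = 1 := by
    rw [Finset.card_compl, hTcard, Fintype.card_fin]; omega
  obtain ⟨a, ha⟩ := Finset.card_eq_one.mp hcompl
  have h1 : f x ∈ Tᶜ := Finset.mem_compl.mpr hfx
  have h2 : f (x + s) ∈ Tᶜ := Finset.mem_compl.mpr hfxs
  rw [ha, Finset.mem_singleton] at h1 h2
  rw [h1, h2]

include hs hn hpair in
lemma step2 (x t : ℕ) (hx1 : 1 ≤ x) (hxn : x + t * s ≤ n)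
    (hcol : ∀ u, u ≤ t * s → x + u ∉ W) : f x = f (x + t * s) := by
  induction t with
  | zero => simp
  | succ p ih =>
    have hps : (p + 1) * s = p * s + s := Nat.succ_mul p s
    have h1 : f x = f (x + p * s) := ih (by omega) (fun u hu => hcol u (by omega))
    have h2 : f (x + p * s) = f (x + p * s + s) :=
      step1 n s f W hs hn hpair (x + p * s) (by omega) (by omega)
        (fun u hu => by
          have := hcol (p * s + u) (by omega)
          rwa [← Nat.add_assoc] at this)
    rw [h1, h2]; congr 1; omega

include hs hn hpair in
lemma stepWrap (hnW : n ∉ W) (hcol : ∀ t, 1 ≤ t → t ≤ s → t ∉ W) : f n = f s := by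
  classical
  have hmem : ∀ t, 1 ≤ t → t ≤ n → t ∈ Finset.Icc 1 n := by
    intro t h1 h2; rw [Finset.mem_Icc]; omega
  have key : ∀ i j, 1 ≤ i → j ≤ s → i < j → f i ≠ f j := by
    intro i j hi hj hij
    have hc : cdist n i j = j - i := by
      have hv : j = i + (j - i) := by omega
      have h := cdist_add n i (j - i) (by omega)
      rw [← hv] at h; exact h
    exact hpair _ _ (hmem i hi (by omega)) (hmem j (by omega) (by omega))
      (hcol i hi (by omega)) (hcol j (by omega) hj) (by omega) (by rw [hc]; omega)
  have keyn : ∀ j, 1 ≤ j → j < s → f n ≠ f j := by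
    intro j h1 h2
    have hc : cdist n j n = j := cdist_wrap n j h1 (by omega)
    have := hpair j n (hmem j h1 (by omega)) (hmem n (by omega) le_rfl)
      (hcol j h1 (by omega)) hnW (by omega) (by rw [hc]; omega)
    exact fun h => this h.symm
  set T : Finset (Fin s) := (Finset.Icc 1 (s - 1)).image (fun j => f j) with hT
  have hTcard : T.card = s - 1 := by
    rw [hT, Finset.card_image_of_injOn, Nat.card_Icc]
    · omega
    · intro j hj j' hj' h
      simp only [Finset.coe_Icc, Set.mem_Icc] at hj hj'
      by_contra hne
      rcases Nat.lt_or_ge j j' with hlt | hge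
      · exact key j j' (by omega) (by omega) hlt h
      · exact key j' j (by omega) (by omega) (by omega) h.symm
  have hfn : f n ∉ T := by
    rw [hT]; simp only [Finset.mem_image, Finset.mem_Icc]
    rintro ⟨j, ⟨hj1, hj2⟩, hj3⟩
    exact keyn j hj1 (by omega) hj3.symm
  have hfs : f s ∉ T := by
    rw [hT]; simp only [Finset.mem_image, Finset.mem_Icc]
    rintro ⟨j, ⟨hj1, hj2⟩, hj3⟩
    exact key j s hj1 le_rfl (by omega) hj3
  have hcompl : Tᶜ.card = 1 := by
    rw [Finset.card_compl, hTcard, Fintype.card_fin]; omega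
  obtain ⟨a, ha⟩ := Finset.card_eq_one.mp hcompl
  have h1 : f n ∈ Tᶜ := Finset.mem_compl.mpr hfn
  have h2 : f s ∈ Tᶜ := Finset.mem_compl.mpr hfs
  rw [ha, Finset.mem_singleton] at h1 h2
  rw [h1, h2]

end steps


lemma run_count (m s : ℕ) (g : ℕ → Fin s) (U C : Finset ℕ)
    (hU : U ⊆ Finset.Icc 1 m) (hC : C ⊆ Finset.Icc 1 m)
    (hmC : m ∈ C)
    (h1 : ∀ j ∈ Finset.Icc 1 m, j ∉ C → j ∈ U)
    (h2 : ∀ j, 2 ≤ j → j ≤ m → j ∉ C → j - 1 ∈ U → g (j - 1) = g j)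
    (h2' : 1 ∉ C → m ∈ U → g m = g 1)
    (h3 : ∀ c, (U.filter (fun i => g i = c)).card ≤ s - 1) :
    U.card ≤ C.card * (s - 1) := by
  classical
  have hm1 : 1 ≤ m := (Finset.mem_Icc.mp (hC hmC)).1
  set φ : ℕ → ℕ := fun i =>
    if h : (C.filter (· ≤ i)).Nonempty then (C.filter (· ≤ i)).max' h else m with hφ
  have hφC : ∀ i, φ i ∈ C := by
    intro i; simp only [hφ]
    split
    · next h => exact (Finset.mem_filter.mp ((C.filter (· ≤ i)).max'_mem h)).1
    · exact hmC
  have hφle : ∀ i, (C.filter (· ≤ i)).Nonempty → φ i ≤ i := by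
    intro i h
    simp only [hφ, dif_pos h]
    exact (Finset.mem_filter.mp ((C.filter (· ≤ i)).max'_mem h)).2
  have hφself : ∀ i ∈ C, φ i = i := by
    intro i hi
    have hne : (C.filter (· ≤ i)).Nonempty := ⟨i, Finset.mem_filter.mpr ⟨hi, le_refl i⟩⟩
    have ha := hφle i hne
    have hb : i ≤ φ i := by
      simp only [hφ, dif_pos hne]
      exact Finset.le_max' (C.filter (· ≤ i)) i (Finset.mem_filter.mpr ⟨hi, le_refl i⟩)
    omega
  have hφpred : ∀ j, 1 ≤ j → j ∉ C → φ (j - 1) = φ j := by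
    intro j hj hjC
    have hset : C.filter (· ≤ j) = C.filter (· ≤ j - 1) := by
      ext x
      simp only [Finset.mem_filter]
      constructor
      · rintro ⟨hx, hxj⟩
        refine ⟨hx, ?_⟩
        rcases eq_or_ne x j with rfl | hne
        · exact absurd hx hjC
        · omega
      · rintro ⟨hx, hxj⟩; exact ⟨hx, by omega⟩
    simp only [hφ, hset]
  have claim : ∀ j, j ∈ U → ∀ i ∈ U, i ≤ j → φ i = φ j → g i = g j := by
    intro j
    induction j using Nat.strong_induction_on with
    | _ j ih =>
      intro hjU i hiU hij hφij
      rcases eq_or_lt_of_le hij with rfl | hlt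
      · rfl
      have hiIcc := Finset.mem_Icc.mp (hU hiU)
      have hjIcc := Finset.mem_Icc.mp (hU hjU)
      by_cases hjC : j ∈ C
      · have hφj : φ j = j := hφself j hjC
        have hemp : ¬ (C.filter (· ≤ i)).Nonempty := by
          intro h
          have := hφle i h
          omega
        have hφi : φ i = m := by simp only [hφ, dif_neg hemp]
        have hjm : j = m := by omega
        have h1C : 1 ∉ C := fun h => hemp ⟨1, Finset.mem_filter.mpr ⟨h, by omega⟩⟩
        have hgm : g m = g 1 := h2' h1C (hjm ▸ hjU)
        have h1U : 1 ∈ U := h1 1 (Finset.mem_Icc.mpr ⟨le_refl 1, hm1⟩) h1C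
        have hφ1 : φ 1 = m := by
          have hne : ¬ (C.filter (· ≤ 1)).Nonempty := by
            rintro ⟨x, hx⟩
            obtain ⟨hxC, hx1⟩ := Finset.mem_filter.mp hx
            exact hemp ⟨x, Finset.mem_filter.mpr ⟨hxC, by omega⟩⟩
          simp only [hφ, dif_neg hne]
        have hg1i : g 1 = g i := ih i (by omega) hiU 1 h1U (by omega) (by omega)
        rw [hjm, hgm]
        exact hg1i.symm
      · have hj2 : 2 ≤ j := by omega
        have hφpd := hφpred j (by omega) hjC
        by_cases hj1C : j - 1 ∈ C
        · have hφjv : φ j = j - 1 := by rw [← hφpd]; exact hφself _ hj1C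
          have hii : i = j - 1 := by
            by_contra hne
            have hilt : i < j - 1 := by omega
            by_cases hne2 : (C.filter (· ≤ i)).Nonempty
            · have := hφle i hne2; omega
            · have : φ i = m := by simp only [hφ, dif_neg hne2]
              omega
          subst hii
          exact h2 j hj2 hjIcc.2 hjC hiU
        · have hj1U : j - 1 ∈ U := h1 (j - 1) (Finset.mem_Icc.mpr ⟨by omega, by omega⟩) hj1C
          have hstep := h2 j hj2 hjIcc.2 hjC hj1U
          have hrec := ih (j - 1) (by omega) hj1U i hiU (by omega) (by omega)
          rw [hrec, hstep]
  have hcard := Finset.card_eq_sum_card_fiberwise (f := φ) (s := U) (t := C) (fun x _ => hφC x)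
  rw [hcard]
  have hfib : ∀ b ∈ C, (U.filter (fun x => φ x = b)).card ≤ s - 1 := by
    intro b hb
    rcases (U.filter (fun x => φ x = b)).eq_empty_or_nonempty with he | ⟨i0, hi0⟩
    · simp [he]
    · obtain ⟨hi0U, hφi0⟩ := Finset.mem_filter.mp hi0
      have hsub : U.filter (fun x => φ x = b) ⊆ U.filter (fun i => g i = g i0) := by
        intro x hx
        obtain ⟨hxU, hφx⟩ := Finset.mem_filter.mp hx
        refine Finset.mem_filter.mpr ⟨hxU, ?_⟩
        rcases le_total x i0 with h | h
        · exact claim i0 hi0U x hxU h (by rw [hφx, hφi0])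
        · exact (claim x hxU i0 hi0U h (by rw [hφx, hφi0])).symm
      exact le_trans (Finset.card_le_card hsub) (h3 (g i0))
  calc ∑ b ∈ C, (U.filter (fun x => φ x = b)).card
      ≤ ∑ _b ∈ C, (s - 1) := Finset.sum_le_sum hfib
    _ = C.card * (s - 1) := by rw [Finset.sum_const, smul_eq_mul]

/-- Let `r, s, l ≥ 2`, `n = l*s*(r*s - 1)` and `A = {ls, 2ls, …, (rs-1)ls}`. Let
`F` be the hypergraph on `[n]` whose hyperedges are all `s`-subsets of `A` together
with all pairs `{x, y} ⊆ [n]` at cyclic distance `< s` (the non-`s`-stable pairs).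
Then `cd^s(F) ≥ r`. -/
theorem stmt_14 (r s l : ℕ) (hr : 2 ≤ r) (hs : 2 ≤ s) (hl : 2 ≤ l) :
    r ≤ cd (l * s * (r * s - 1)) s
      ((((Finset.Icc 1 (r * s - 1)).image (fun i => i * (l * s))).powersetCard s) ∪
        ((Finset.Icc 1 (l * s * (r * s - 1))).powersetCard 2).filter
          (fun e => ∃ x ∈ e, ∃ y ∈ e, x ≠ y ∧ cdist (l * s * (r * s - 1)) x y < s)) := by
  classical
  unfold cd
  apply le_csInf
  · refine ⟨(Finset.Icc 1 (l * s * (r * s - 1))).card,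
      Finset.Icc 1 (l * s * (r * s - 1)), subset_rfl, rfl, fun _ => ⟨0, by omega⟩, ?_⟩
    intro e he c hsub
    rw [Finset.sdiff_self, Finset.filter_empty, Finset.subset_empty] at hsub
    rcases Finset.mem_union.mp he with h | h
    · have hc := (Finset.mem_powersetCard.mp h).2
      rw [hsub, Finset.card_empty] at hc
      omega
    · have hc := (Finset.mem_powersetCard.mp (Finset.mem_filter.mp h).1).2
      rw [hsub, Finset.card_empty] at hc
      omega
  · rintro k ⟨W, hWsub, hWcard, f, hf⟩
    by_contra hkr
    push_neg at hkr
    set m := r * s - 1 with hmdef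
    set L := l * s with hLdef
    set n := L * m with hndef
    have hrsmul : 4 ≤ r * s := by have := Nat.mul_le_mul hr hs; omega
    have hm1 : 1 ≤ m := by omega
    have hm3 : 3 ≤ m := by omega
    have hsL : 2 * s ≤ L := by have := Nat.mul_le_mul_right s hl; omega
    have hL1 : 1 ≤ L := by omega
    have hsn : 2 * s + 1 ≤ n := by
      have h1 : 2 * s * 3 ≤ L * 3 := Nat.mul_le_mul_right 3 hsL
      have h2 : L * 3 ≤ L * m := Nat.mul_le_mul_left L hm3
      omega
    have hmn : m * L = n := by rw [hndef, Nat.mul_comm]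
    have hmulL' : ∀ i : ℕ, 1 ≤ i → i * L = (i - 1) * L + L := by
      intro i hi
      have h : (i - 1 + 1) * L = (i - 1) * L + L := Nat.succ_mul (i - 1) L
      rw [show i - 1 + 1 = i from by omega] at h
      exact h
    have haIcc : ∀ i, 1 ≤ i → i ≤ m → i * L ∈ Finset.Icc 1 n := by
      intro i h1 h2
      have hub : i * L ≤ m * L := Nat.mul_le_mul_right L h2
      have hlb : 1 * L ≤ i * L := Nat.mul_le_mul_right L h1
      rw [Finset.mem_Icc]; omega
    -- pair property
    have hpairP : ∀ x y, x ∈ Finset.Icc 1 n → y ∈ Finset.Icc 1 n → x ∉ W → y ∉ W →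
        x ≠ y → cdist n x y < s → f x ≠ f y := by
      intro x y hx hy hxW hyW hxy hd heq
      refine hf {x, y} ?_ (f x) ?_
      · apply Finset.mem_union_right
        refine Finset.mem_filter.mpr ⟨Finset.mem_powersetCard.mpr ⟨?_, Finset.card_pair hxy⟩,
          ⟨x, by simp, y, by simp, hxy, hd⟩⟩
        intro z hz
        rcases Finset.mem_insert.mp hz with rfl | hz'
        · exact hx
        · rw [Finset.mem_singleton.mp hz']; exact hy
      · intro z hz
        rcases Finset.mem_insert.mp hz with rfl | hz'
        · exact Finset.mem_filter.mpr ⟨Finset.mem_sdiff.mpr ⟨hx, hxW⟩, rfl⟩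
        · rw [Finset.mem_singleton.mp hz']
          exact Finset.mem_filter.mpr ⟨Finset.mem_sdiff.mpr ⟨hy, hyW⟩, heq.symm⟩
    -- color budget on A
    have hbudget : ∀ c : Fin s,
        ((Finset.Icc 1 m).filter (fun i => i * L ∉ W ∧ f (i * L) = c)).card ≤ s - 1 := by
      intro c
      by_contra hcon
      push_neg at hcon
      obtain ⟨V, hVsub, hVcard⟩ := Finset.exists_subset_card_eq
        (show s ≤ ((Finset.Icc 1 m).filter (fun i => i * L ∉ W ∧ f (i * L) = c)).card
          from by omega)
      have hVIcc : V ⊆ Finset.Icc 1 m := fun i hi => Finset.mem_of_mem_filter i (hVsub hi)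
      have hinj : Set.InjOn (fun i => i * L) ↑V := by
        intro a _ b _ hab
        exact Nat.eq_of_mul_eq_mul_right (by omega) hab
      refine hf (V.image (fun i => i * L)) ?_ c ?_
      · apply Finset.mem_union_left
        refine Finset.mem_powersetCard.mpr ⟨Finset.image_subset_image hVIcc, ?_⟩
        rw [Finset.card_image_of_injOn hinj, hVcard]
      · intro z hz
        obtain ⟨i, hiV, rfl⟩ := Finset.mem_image.mp hz
        obtain ⟨hiIcc, hiW, hic⟩ := Finset.mem_filter.mp (hVsub hiV)
        obtain ⟨h1, h2⟩ := Finset.mem_Icc.mp hiIcc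
        exact Finset.mem_filter.mpr ⟨Finset.mem_sdiff.mpr ⟨haIcc i h1 h2, hiW⟩, hic⟩
    -- blocked intervals
    set B := (Finset.Icc 1 m).filter (fun i => ∃ w ∈ W, (i - 1) * L + 1 ≤ w ∧ w ≤ i * L)
      with hBdef
    have hBcard : B.card ≤ k := by
      have hsub : B ⊆ W.image (fun w => (w - 1) / L + 1) := by
        intro i hi
        rw [hBdef] at hi
        obtain ⟨hiIcc, w, hwW, hw1, hw2⟩ := Finset.mem_filter.mp hi
        obtain ⟨hi1, hi2⟩ := Finset.mem_Icc.mp hiIcc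
        refine Finset.mem_image.mpr ⟨w, hwW, ?_⟩
        have hdiv : (w - 1) / L = i - 1 := by
          apply Nat.div_eq_of_lt_le (by omega)
          rw [show i - 1 + 1 = i from by omega]
          omega
        rw [hdiv]; omega
      calc B.card ≤ (W.image (fun w => (w - 1) / L + 1)).card := Finset.card_le_card hsub
        _ ≤ W.card := Finset.card_image_le
        _ = k := hWcard
    have hfree : ∀ i, 1 ≤ i → i ≤ m → i ∉ B →
        ∀ w, (i - 1) * L + 1 ≤ w → w ≤ i * L → w ∉ W := by
      intro i h1 h2 hiB w hw1 hw2 hwW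
      exact hiB (by
        rw [hBdef]
        exact Finset.mem_filter.mpr ⟨Finset.mem_Icc.mpr ⟨h1, h2⟩, w, hwW, hw1, hw2⟩)
    have hc1 : ∀ i, 1 ≤ i → i ≤ m → i ∉ B → i * L ∉ W := by
      intro i h1 h2 hiB
      apply hfree i h1 h2 hiB
      · have := hmulL' i h1; omega
      · exact le_rfl
    -- chain
    have hc2 : ∀ i, 1 ≤ i → i + 1 ≤ m → (i + 1) ∉ B → i * L ∉ W →
        f (i * L) = f ((i + 1) * L) := by
      intro i h1 h2 hB hW
      have hip : (i + 1) * L = i * L + L := Nat.succ_mul i L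
      have hcol : ∀ u, u ≤ l * s → i * L + u ∉ W := by
        intro u hu
        rcases Nat.eq_zero_or_pos u with rfl | hu1
        · simpa using hW
        · apply hfree (i + 1) (by omega) h2 hB
          · rw [show i + 1 - 1 = i from rfl]; omega
          · omega
      have hub : (i + 1) * L ≤ m * L := Nat.mul_le_mul_right L h2
      have hx1 : 1 ≤ i * L := Nat.mul_pos (by omega) (by omega)
      have hstep := step2 n s f W hs hsn hpairP (i * L) l hx1 (by omega) hcol
      rw [show i * L + l * s = (i + 1) * L from by omega] at hstep
      exact hstep
    -- wrap chain
    have hLn : L ≤ n := by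
      have := Nat.mul_le_mul_right L hm1
      omega
    have hc2' : 1 ∉ B → m * L ∉ W → f (m * L) = f (1 * L) := by
      intro h1B hmW
      have hfree1 : ∀ w, 1 ≤ w → w ≤ L → w ∉ W := by
        intro w hw1 hw2
        apply hfree 1 le_rfl hm1 h1B w (by omega) (by omega)
      have hnm : f n = f s := stepWrap n s f W hs hsn hpairP (by rw [← hmn]; exact hmW)
        (fun t ht1 ht2 => hfree1 t ht1 (by omega))
      have hls : s + (l - 1) * s = L := by
        have h := Nat.sub_mul l 1 s
        omega
      have hstep : f s = f (s + (l - 1) * s) := step2 n s f W hs hsn hpairP s (l - 1)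
        (by omega) (by rw [hls]; exact hLn) (fun u hu => hfree1 (s + u) (by omega) (by omega))
      rw [hls] at hstep
      rw [hmn, Nat.one_mul, hnm]
      exact hstep
    -- case split on B
    rcases B.eq_empty_or_nonempty with hBemp | ⟨b0, hb0⟩
    · have hall : ∀ i, 1 ≤ i → i ≤ m → f (i * L) = f (1 * L) := by
        intro i
        induction i with
        | zero => intro h1 _; omega
        | succ p ih =>
          intro _ hpm
          rcases Nat.eq_zero_or_pos p with rfl | hp
          · rfl
          · have hprev := ih (by omega) (by omega)
            have hnB : (p + 1) ∉ B := by rw [hBemp]; exact Finset.notMem_empty _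
            have hpB : p ∉ B := by rw [hBemp]; exact Finset.notMem_empty _
            have hstep := hc2 p (by omega) (by omega) hnB (hc1 p (by omega) (by omega) hpB)
            rw [← hstep]
            exact hprev
      have hsubAll : Finset.Icc 1 m ⊆
          (Finset.Icc 1 m).filter (fun i => i * L ∉ W ∧ f (i * L) = f (1 * L)) := by
        intro i hi
        obtain ⟨h1, h2⟩ := Finset.mem_Icc.mp hi
        have hiB : i ∉ B := by rw [hBemp]; exact Finset.notMem_empty _
        exact Finset.mem_filter.mpr ⟨hi, hc1 i h1 h2 hiB, hall i h1 h2⟩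
      have hcard := le_trans (Finset.card_le_card hsubAll) (hbudget (f (1 * L)))
      rw [Nat.card_Icc] at hcard
      have h2s : 2 * s ≤ r * s := Nat.mul_le_mul_right s hr
      omega
    · have hb0' := hb0
      rw [hBdef] at hb0'
      obtain ⟨hb0Icc, _⟩ := Finset.mem_filter.mp hb0'
      obtain ⟨hb01, hb0m⟩ := Finset.mem_Icc.mp hb0Icc
      set τ : ℕ → ℕ := fun j => if j + b0 ≤ m then j + b0 else j + b0 - m with hτ
      have hτmem : ∀ j, 1 ≤ j → j ≤ m → 1 ≤ τ j ∧ τ j ≤ m := by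
        intro j h1 h2; simp only [hτ]; split <;> omega
      have hτinj : ∀ j j', 1 ≤ j → j ≤ m → 1 ≤ j' → j' ≤ m → τ j = τ j' → j = j' := by
        intro j j' a b c d h; simp only [hτ] at h; split at h <;> split at h <;> omega
      have hτm : τ m = b0 := by simp only [hτ]; split <;> omega
      set g : ℕ → Fin s := fun j => f (τ j * L) with hg
      set C := (Finset.Icc 1 m).filter (fun j => τ j ∈ B) with hCdef
      set U := (Finset.Icc 1 m).filter (fun j => τ j * L ∉ W) with hUdef
      have hmC : m ∈ C := by
        rw [hCdef]
        exact Finset.mem_filter.mpr ⟨Finset.mem_Icc.mpr ⟨hm1, le_rfl⟩, by rw [hτm]; exact hb0⟩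
      have h1' : ∀ j ∈ Finset.Icc 1 m, j ∉ C → j ∈ U := by
        intro j hj hjC
        obtain ⟨hj1, hj2⟩ := Finset.mem_Icc.mp hj
        have ht := hτmem j hj1 hj2
        have hτjB : τ j ∉ B := fun h => hjC (by rw [hCdef]; exact Finset.mem_filter.mpr ⟨hj, h⟩)
        rw [hUdef]
        exact Finset.mem_filter.mpr ⟨hj, hc1 (τ j) ht.1 ht.2 hτjB⟩
      have h2' : ∀ j, 2 ≤ j → j ≤ m → j ∉ C → j - 1 ∈ U → g (j - 1) = g j := by
        intro j hj2 hjm hjC hj1U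
        have hτjB : τ j ∉ B := fun h => hjC (by
          rw [hCdef]
          exact Finset.mem_filter.mpr ⟨Finset.mem_Icc.mpr ⟨by omega, hjm⟩, h⟩)
        rw [hUdef] at hj1U
        have hj1W : τ (j - 1) * L ∉ W := (Finset.mem_filter.mp hj1U).2
        by_cases hcase2 : j + b0 ≤ m
        · have e1 : τ j = j + b0 := by simp only [hτ]; rw [if_pos hcase2]
          have e2 : τ (j - 1) = j - 1 + b0 := by simp only [hτ]; rw [if_pos (by omega)]
          have hstep := hc2 (j - 1 + b0) (by omega) (by omega)
            (by rw [show j - 1 + b0 + 1 = τ j from by omega]; exact hτjB)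
            (by rw [← e2]; exact hj1W)
          simp only [hg]; rw [e1, e2]
          rw [show j - 1 + b0 + 1 = j + b0 from by omega] at hstep
          exact hstep
        · by_cases hcase : j + b0 ≤ m + 1
          · have e1 : τ j = 1 := by simp only [hτ]; rw [if_neg (by omega)]; omega
            have e2 : τ (j - 1) = m := by simp only [hτ]; rw [if_pos (by omega)]; omega
            have hw := hc2' (by rw [← e1]; exact hτjB) (by rw [← e2]; exact hj1W)
            simp only [hg]; rw [e1, e2]
            exact hw
          · have e1 : τ j = j + b0 - m := by simp only [hτ]; rw [if_neg (by omega)]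
            have e2 : τ (j - 1) = j - 1 + b0 - m := by simp only [hτ]; rw [if_neg (by omega)]
            have hstep := hc2 (j - 1 + b0 - m) (by omega) (by omega)
              (by rw [show j - 1 + b0 - m + 1 = τ j from by omega]; exact hτjB)
              (by rw [← e2]; exact hj1W)
            simp only [hg]; rw [e1, e2]
            rw [show j - 1 + b0 - m + 1 = j + b0 - m from by omega] at hstep
            exact hstep
      have h2'' : 1 ∉ C → m ∈ U → g m = g 1 := by
        intro h1C hmU
        have h1B' : τ 1 ∉ B := fun h => h1C (by
          rw [hCdef]
          exact Finset.mem_filter.mpr ⟨Finset.mem_Icc.mpr ⟨le_rfl, hm1⟩, h⟩)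
        rw [hUdef] at hmU
        have hmW : τ m * L ∉ W := (Finset.mem_filter.mp hmU).2
        rw [hτm] at hmW
        by_cases hcase : b0 < m
        · have e1 : τ 1 = b0 + 1 := by simp only [hτ]; rw [if_pos (by omega)]; omega
          have hstep := hc2 b0 hb01 (by omega) (by rw [← e1]; exact h1B') hmW
          simp only [hg]; rw [hτm, e1]
          exact hstep
        · have hb0m' : b0 = m := by omega
          have e1 : τ 1 = 1 := by simp only [hτ]; rw [if_neg (by omega)]; omega
          have hw := hc2' (by rw [← e1]; exact h1B') (by rw [← hb0m']; exact hmW)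
          simp only [hg]; rw [hτm, e1, hb0m']
          exact hw
      have h3' : ∀ c : Fin s, (U.filter (fun i => g i = c)).card ≤ s - 1 := by
        intro c
        have hmap : ∀ j ∈ U.filter (fun i => g i = c),
            τ j ∈ (Finset.Icc 1 m).filter (fun i => i * L ∉ W ∧ f (i * L) = c) := by
          intro j hj
          obtain ⟨hjU, hjc⟩ := Finset.mem_filter.mp hj
          rw [hUdef] at hjU
          obtain ⟨hjIcc, hjW⟩ := Finset.mem_filter.mp hjU
          obtain ⟨hj1, hj2⟩ := Finset.mem_Icc.mp hjIcc
          have ht := hτmem j hj1 hj2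
          simp only [hg] at hjc
          exact Finset.mem_filter.mpr ⟨Finset.mem_Icc.mpr ⟨ht.1, ht.2⟩, hjW, hjc⟩
        have hinj : Set.InjOn τ ↑(U.filter (fun i => g i = c)) := by
          intro a ha b hb h
          have ha' := Finset.mem_Icc.mp (Finset.mem_of_mem_filter a
            (by rw [hUdef] at *; exact Finset.mem_of_mem_filter a ha))
          have hb' := Finset.mem_Icc.mp (Finset.mem_of_mem_filter b
            (by rw [hUdef] at *; exact Finset.mem_of_mem_filter b hb))
          exact hτinj a b ha'.1 ha'.2 hb'.1 hb'.2 h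
        exact le_trans (Finset.card_le_card_of_injOn τ hmap hinj) (hbudget c)
      have hfin1 : U.card ≤ C.card * (s - 1) :=
        run_count m s g U C (by rw [hUdef]; exact Finset.filter_subset _ _)
          (by rw [hCdef]; exact Finset.filter_subset _ _) hmC h1' h2' h2'' h3'
      have hCB : C.card ≤ B.card := by
        apply Finset.card_le_card_of_injOn τ
        · intro j hj
          rw [hCdef] at hj
          exact (Finset.mem_filter.mp hj).2
        · intro a ha b hb h
          rw [hCdef] at ha hb
          have ha' := Finset.mem_Icc.mp (Finset.mem_of_mem_filter a ha)
          have hb' := Finset.mem_Icc.mp (Finset.mem_of_mem_filter b hb)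
          exact hτinj a b ha'.1 ha'.2 hb'.1 hb'.2 h
      have hcover : Finset.Icc 1 m ⊆ U ∪ C := by
        intro j hj
        obtain ⟨hj1, hj2⟩ := Finset.mem_Icc.mp hj
        by_cases hjW : τ j * L ∈ W
        · refine Finset.mem_union_right _ ?_
          rw [hCdef]
          refine Finset.mem_filter.mpr ⟨hj, ?_⟩
          have ht := hτmem j hj1 hj2
          rw [hBdef]
          refine Finset.mem_filter.mpr ⟨Finset.mem_Icc.mpr ⟨ht.1, ht.2⟩,
            τ j * L, hjW, ?_, le_rfl⟩
          have := hmulL' (τ j) ht.1; omega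
        · refine Finset.mem_union_left _ ?_
          rw [hUdef]
          exact Finset.mem_filter.mpr ⟨hj, hjW⟩
      have hmcard : m ≤ U.card + C.card := by
        have h1 := Finset.card_le_card hcover
        have h2 := Finset.card_union_le U C
        rw [Nat.card_Icc] at h1
        omega
      have hCk : C.card ≤ k := le_trans hCB hBcard
      have hCs : C.card * s ≤ (r - 1) * s := Nat.mul_le_mul_right s (by omega)
      have hsplit : C.card * (s - 1) + C.card = C.card * s := by
        have h : C.card * (s - 1 + 1) = C.card * (s - 1) + C.card :=
          Nat.mul_succ C.card (s - 1)
        rw [show s - 1 + 1 = s from by omega] at h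
        omega
      have hsub2 : (r - 1) * s = r * s - s := by rw [Nat.sub_mul, Nat.one_mul]
      omega
end

section
/- Let r ≥ 2, l ≥ 1, n = lr(2r-1). Let F be the graph on [n] whose edges are all pairs {x,y} with min(|x-y|, n-|x-y|) < r, together with all pairs {a·lr, b·lr} for distinct a, b in {1,...,2r-1}. Then the r-colorability defect of F satisfies cd^r(F) ≥ r. -/
/-- The `r`-colorability defect of a graph `G` on `[n]`: the minimum size of a set
`W ⊆ [n]` such that the induced subgraph of `G` on `[n] \ W` is properly
`r`-colorable. -/
noncomputable def cdG (n r : ℕ) (G : SimpleGraph ℕ) : ℕ :=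
  sInf {k | ∃ W : Finset ℕ, W ⊆ Finset.Icc 1 n ∧ W.card = k ∧
    ∃ f : ℕ → Fin r, ∀ x ∈ Finset.Icc 1 n \ W, ∀ y ∈ Finset.Icc 1 n \ W,
      G.Adj x y → f x ≠ f y}

/-- The graph on `[n]` (with `n = l*r*(2r-1)`) whose edges are the pairs at cyclic
distance `< r` together with all pairs `{a·lr, b·lr}` for distinct
`a, b ∈ {1,…,2r-1}`. -/
def Fbig (l r : ℕ) : SimpleGraph ℕ :=
  SimpleGraph.fromRel (fun x y =>
    x ∈ Finset.Icc 1 (l * r * (2 * r - 1)) ∧ y ∈ Finset.Icc 1 (l * r * (2 * r - 1)) ∧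
      (cdist (l * r * (2 * r - 1)) x y < r ∨
        ∃ a ∈ Finset.Icc 1 (2 * r - 1), ∃ b ∈ Finset.Icc 1 (2 * r - 1),
          a ≠ b ∧ x = a * (l * r) ∧ y = b * (l * r)))

lemma class_card_lt {r m : ℕ} (hr : 2 ≤ r) (hm : 2 ≤ m) (T : Finset ℕ)
    (hT : ∀ x ∈ T, 1 ≤ x ∧ x ≤ m * r)
    (hdist : ∀ x ∈ T, ∀ y ∈ T, x < y → r ≤ y - x ∧ r ≤ m * r - (y - x))
    (q : ℕ) (hq1 : 1 ≤ q) (hqm : q ≤ m) (hpT : q * r ∈ T)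
    (q' : ℕ) (hq'1 : 1 ≤ q') (hq'm : q' ≤ m) (hwT : q' * r ∉ T) :
    T.card ≤ m - 1 := by
  by_contra hcard
  push_neg at hcard
  have hcard' : m ≤ T.card := by omega
  have hr0 : 0 < r := by omega
  set g : ℕ → ℕ := fun x => (x - 1) / r with hg
  have hblk : ∀ x ∈ T, g x * r + 1 ≤ x ∧ x ≤ g x * r + r ∧ g x < m := by
    intro x hx
    obtain ⟨h1, h2⟩ := hT x hx
    have hdm : g x * r + (x - 1) % r = x - 1 := by
      rw [Nat.mul_comm]; exact Nat.div_add_mod _ _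
    have hml : (x - 1) % r < r := Nat.mod_lt _ hr0
    have hgm : g x < m := by
      have : x - 1 < m * r := by omega
      simpa [hg] using (Nat.div_lt_iff_lt_mul hr0).mpr this
    exact ⟨by omega, by omega, hgm⟩
  have hinj : ∀ x ∈ T, ∀ y ∈ T, g x = g y → x = y := by
    intro x hx y hy hgxy
    by_contra hne
    obtain ⟨bx1, bx2, _⟩ := hblk x hx
    obtain ⟨by1, by2, _⟩ := hblk y hy
    have e : g x * r = g y * r := by rw [hgxy]
    rcases Nat.lt_or_ge x y with h | h
    · have := (hdist x hx y hy h).1; omega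
    · have h' : y < x := by omega
      have := (hdist y hy x hx h').1; omega
  -- every block index `< m` is attained
  have hex : ∀ j, j < m → ∃ x ∈ T, g x = j := by
    intro j hj
    have hsub : T.image g ⊆ Finset.range m := by
      intro j' hj'
      obtain ⟨x, hx, rfl⟩ := Finset.mem_image.mp hj'
      exact Finset.mem_range.mpr (hblk x hx).2.2
    have hcardim : (T.image g).card = T.card :=
      Finset.card_image_of_injOn (fun x hx y hy => hinj x hx y hy)
    have : T.image g = Finset.range m := by
      apply Finset.eq_of_subset_of_card_le hsub
      rw [hcardim, Finset.card_range]; exact hcard'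
    have : j ∈ T.image g := by rw [this]; exact Finset.mem_range.mpr hj
    obtain ⟨x, hx, hgx⟩ := Finset.mem_image.mp this
    exact ⟨x, hx, hgx⟩
  -- the chain inequality
  have hchain : ∀ d i, i + d < m → ∀ xi ∈ T, ∀ xj ∈ T, g xi = i → g xj = i + d →
      xi + d * r ≤ xj := by
    intro d
    induction d with
    | zero =>
      intro i _ xi hxi xj hxj hgi hgj
      have : xi = xj := hinj xi hxi xj hxj (by omega)
      omega
    | succ d ih =>
      intro i him xi hxi xj hxj hgi hgj
      obtain ⟨y, hy, hgy⟩ := hex (i + d) (by omega)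
      have h1 : xi + d * r ≤ y := ih i (by omega) xi hxi y hy hgi hgy
      obtain ⟨by1, by2, _⟩ := hblk y hy
      obtain ⟨bj1, bj2, _⟩ := hblk xj hxj
      have e1 : g y * r + r = g xj * r := by
        rw [hgy, hgj]
        have : (i + d) * r + 1 * r = (i + (d + 1)) * r := by
          rw [← Nat.add_mul, Nat.add_assoc]
        omega
      have hlt : y < xj := by omega
      have := (hdist y hy xj hxj hlt).1
      have e2 : d * r + r = (d + 1) * r := by
        have : d * r + 1 * r = (d + 1) * r := by rw [← Nat.add_mul]
        omega
      omega
  -- the last block element equals m*r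
  obtain ⟨xm, hxm, hgxm⟩ := hex (m - 1) (by omega)
  have hgp : g (q * r) = q - 1 := by
    have e : q * r - 1 = (r - 1) + (q - 1) * r := by
      have : (q - 1) * r + 1 * r = q * r := by
        rw [← Nat.add_mul]; congr 1; omega
      omega
    rw [hg]; simp only
    rw [e, Nat.add_mul_div_right _ _ hr0, Nat.div_eq_of_lt (by omega)]
    omega
  have hqr_le : q * r ≤ m * r := Nat.mul_le_mul_right r hqm
  have hchain1 : q * r + (m - q) * r ≤ xm :=
    hchain (m - q) (q - 1) (by omega) (q * r) hpT xm hxm hgp (by rw [hgxm]; omega)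
  have hmr : q * r + (m - q) * r = m * r := by
    rw [← Nat.add_mul]; congr 1; omega
  have hxm_le : xm ≤ m * r := (hT xm hxm).2
  have hxm_eq : xm = m * r := by omega
  -- the first block element equals r
  obtain ⟨x0, hx0, hgx0⟩ := hex 0 (by omega)
  obtain ⟨b01, b02, _⟩ := hblk x0 hx0
  rw [hgx0] at b01 b02
  simp only [Nat.zero_mul] at b01 b02
  have hx0r : x0 = r := by
    have hlt : x0 < xm := by
      have h2r : 2 * r ≤ m * r := Nat.mul_le_mul_right r hm
      omega
    have hd2 := (hdist x0 hx0 xm hxm hlt).2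
    have h2r : 2 * r ≤ m * r := Nat.mul_le_mul_right r hm
    omega
  -- the block of q' contains exactly q'*r, contradiction
  obtain ⟨xw, hxw, hgxw⟩ := hex (q' - 1) (by omega)
  have hchain2 : x0 + (q' - 1) * r ≤ xw :=
    hchain (q' - 1) 0 (by omega) x0 hx0 xw hxw hgx0 (by omega)
  obtain ⟨bw1, bw2, _⟩ := hblk xw hxw
  have e3 : (q' - 1) * r + 1 * r = q' * r := by
    rw [← Nat.add_mul]; congr 1; omega
  have hxw_eq : xw = q' * r := by
    rw [hgxw] at bw1 bw2
    omega
  rw [hxw_eq] at hxw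
  exact hwT hxw


/-- For `r ≥ 2`, `l ≥ 1`, `n = l*r*(2r-1)`: the graph `F` above satisfies
`cd^r(F) ≥ r`. -/
theorem stmt_15 (r l : ℕ) (hr : 2 ≤ r) (hl : 1 ≤ l) :
    r ≤ cdG (l * r * (2 * r - 1)) r (Fbig l r) := by
  have hr0 : 0 < r := by omega
  set n := l * r * (2 * r - 1) with hn
  set m := l * (2 * r - 1) with hmdef
  have hmn : n = m * r := by rw [hn, hmdef, mul_right_comm]
  have hm3 : 3 ≤ m := by
    have : 2 * r - 1 ≤ l * (2 * r - 1) := Nat.le_mul_of_pos_left _ (by omega)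
    omega
  rw [cdG]
  apply le_csInf
  · exact ⟨(Finset.Icc 1 n).card, Finset.Icc 1 n, subset_rfl, rfl,
      (fun _ => ⟨0, hr0⟩), fun x hx => by simp at hx⟩
  rintro k ⟨W, hWsub, hWcard, f, hf⟩
  by_contra hk
  push_neg at hk
  -- the special vertices
  have hlr : 0 < l * r := by positivity
  set Sp : Finset ℕ := (Finset.Icc 1 (2 * r - 1)).image (fun a => a * (l * r)) with hSpdef
  have hSpinj : Function.Injective (fun a : ℕ => a * (l * r)) :=
    fun a b h => Nat.eq_of_mul_eq_mul_right hlr h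
  have hSpcard : Sp.card = 2 * r - 1 := by
    rw [hSpdef, Finset.card_image_of_injective _ hSpinj, Nat.card_Icc]; omega
  have hSpmem : ∀ x ∈ Sp, ∃ a, 1 ≤ a ∧ a ≤ 2 * r - 1 ∧ x = a * (l * r) := by
    intro x hx
    obtain ⟨a, ha, rfl⟩ := Finset.mem_image.mp hx
    rw [Finset.mem_Icc] at ha
    exact ⟨a, ha.1, ha.2, rfl⟩
  have hSpsub : Sp ⊆ Finset.Icc 1 n := by
    intro x hx
    obtain ⟨a, ha1, ha2, rfl⟩ := hSpmem x hx
    rw [Finset.mem_Icc]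
    refine ⟨Nat.one_le_iff_ne_zero.mpr (by positivity), ?_⟩
    calc a * (l * r) ≤ (2 * r - 1) * (l * r) := Nat.mul_le_mul_right _ ha2
      _ = n := by rw [hn, mul_comm]
  have hSpadj : ∀ x ∈ Sp, ∀ y ∈ Sp, x ≠ y → (Fbig l r).Adj x y := by
    intro x hx y hy hxy
    obtain ⟨a, ha1, ha2, hax⟩ := hSpmem x hx
    obtain ⟨b, hb1, hb2, hby⟩ := hSpmem y hy
    simp only [Fbig, SimpleGraph.fromRel_adj]
    refine ⟨hxy, Or.inl ⟨by rw [← hn]; exact hSpsub hx, by rw [← hn]; exact hSpsub hy,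
      Or.inr ⟨a, Finset.mem_Icc.mpr ⟨ha1, ha2⟩, b, Finset.mem_Icc.mpr ⟨hb1, hb2⟩, ?_, hax, hby⟩⟩⟩
    rintro rfl
    exact hxy (hax.trans hby.symm)
  -- remaining specials
  have hRmem : ∀ x ∈ Sp \ W, x ∈ Finset.Icc 1 n \ W := by
    intro x hx
    rw [Finset.mem_sdiff] at hx ⊢
    exact ⟨hSpsub hx.1, hx.2⟩
  have hRinj : ∀ x ∈ Sp \ W, ∀ y ∈ Sp \ W, f x = f y → x = y := by
    intro x hx y hy hfxy
    by_contra hne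
    exact hf x (hRmem x hx) y (hRmem y hy)
      (hSpadj x (Finset.mem_sdiff.mp hx).1 y (Finset.mem_sdiff.mp hy).1 hne) hfxy
  have hRcard_le : (Sp \ W).card ≤ r := by
    have := Finset.card_le_card_of_injOn f (fun x _ => Finset.mem_univ (f x)) hRinj
    simpa using this
  have hRcard_ge : Sp.card - W.card ≤ (Sp \ W).card := Finset.le_card_sdiff W Sp
  have hkeq : k = r - 1 := by omega
  have hRr : (Sp \ W).card = r := by omega
  -- W consists of special vertices
  have hWS : W ⊆ Sp := by
    have h1 : (Sp \ W).card + (Sp ∩ W).card = Sp.card := Finset.card_sdiff_add_card_inter Sp W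
    have h2 : W.card ≤ (Sp ∩ W).card := by omega
    have h3 : Sp ∩ W = W := Finset.eq_of_subset_of_card_le Finset.inter_subset_right h2
    intro w hw
    rw [← h3] at hw
    exact (Finset.mem_inter.mp hw).1
  -- every color is used by a remaining special vertex
  have hsurj : ∀ c : Fin r, ∃ p ∈ Sp \ W, f p = c := by
    intro c
    have h1 : ((Sp \ W).image f).card = r := by
      rw [Finset.card_image_of_injOn (fun x hx y hy => hRinj x hx y hy), hRr]
    have h2 : (Sp \ W).image f = Finset.univ :=
      Finset.eq_univ_of_card _ (by rw [h1, Fintype.card_fin])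
    have : c ∈ (Sp \ W).image f := by rw [h2]; exact Finset.mem_univ c
    obtain ⟨p, hp, hfp⟩ := Finset.mem_image.mp this
    exact ⟨p, hp, hfp⟩
  -- W is nonempty
  obtain ⟨w, hw⟩ : W.Nonempty := Finset.card_pos.mp (by omega)
  obtain ⟨b, hb1, hb2, hbw⟩ := hSpmem w (hWS hw)
  -- each color class has at most m - 1 elements
  have hcls : ∀ c : Fin r,
      ((Finset.Icc 1 n \ W).filter (fun x => f x = c)).card ≤ m - 1 := by
    intro c
    set T := (Finset.Icc 1 n \ W).filter (fun x => f x = c) with hT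
    have hTmem : ∀ x ∈ T, x ∈ Finset.Icc 1 n \ W ∧ f x = c := by
      intro x hx
      exact Finset.mem_filter.mp hx
    have hTbnd : ∀ x ∈ T, 1 ≤ x ∧ x ≤ m * r := by
      intro x hx
      have := Finset.mem_Icc.mp (Finset.mem_sdiff.mp (hTmem x hx).1).1
      omega
    have hTdist : ∀ x ∈ T, ∀ y ∈ T, x < y → r ≤ y - x ∧ r ≤ m * r - (y - x) := by
      intro x hx y hy hxy
      obtain ⟨hx', hfx⟩ := hTmem x hx
      obtain ⟨hy', hfy⟩ := hTmem y hy
      have hnadj : ¬ (Fbig l r).Adj x y := fun h => hf x hx' y hy' h (hfx.trans hfy.symm)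
      simp only [Fbig, SimpleGraph.fromRel_adj] at hnadj
      have hxI : x ∈ Finset.Icc 1 (l * r * (2 * r - 1)) := by
        rw [← hn]; exact (Finset.mem_sdiff.mp hx').1
      have hyI : y ∈ Finset.Icc 1 (l * r * (2 * r - 1)) := by
        rw [← hn]; exact (Finset.mem_sdiff.mp hy').1
      have key : ¬ (cdist (l * r * (2 * r - 1)) x y < r) := by
        intro hlt
        exact hnadj ⟨by omega, Or.inl ⟨hxI, hyI, Or.inl hlt⟩⟩
      rw [← hn, cdist, Nat.max_eq_right hxy.le, Nat.min_eq_left hxy.le] at key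
      push_neg at key
      have := Nat.le_min.mp key
      omega
    -- the special vertex of this class
    obtain ⟨p, hpR, hpc⟩ := hsurj c
    obtain ⟨a, ha1, ha2, hap⟩ := hSpmem p (Finset.mem_sdiff.mp hpR).1
    have hpe : p = (a * l) * r := by rw [hap, mul_assoc]
    have hpT : (a * l) * r ∈ T := by
      rw [← hpe, hT, Finset.mem_filter]
      exact ⟨hRmem p hpR, hpc⟩
    have hal1 : 1 ≤ a * l := Nat.mul_pos (by omega) (by omega)
    have halm : a * l ≤ m := by
      calc a * l ≤ (2 * r - 1) * l := Nat.mul_le_mul_right _ ha2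
        _ = m := by rw [hmdef, mul_comm]
    have hwe : w = (b * l) * r := by rw [hbw, mul_assoc]
    have hbl1 : 1 ≤ b * l := Nat.mul_pos (by omega) (by omega)
    have hblm : b * l ≤ m := by
      calc b * l ≤ (2 * r - 1) * l := Nat.mul_le_mul_right _ hb2
        _ = m := by rw [hmdef, mul_comm]
    have hwT : (b * l) * r ∉ T := by
      rw [← hwe, hT, Finset.mem_filter]
      rintro ⟨hmem, -⟩
      exact (Finset.mem_sdiff.mp hmem).2 hw
    exact class_card_lt hr (by omega) T hTbnd hTdist (a * l) hal1 halm hpT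
      (b * l) hbl1 hblm hwT
  -- counting
  have hsum : (Finset.Icc 1 n \ W).card =
      ∑ c : Fin r, ((Finset.Icc 1 n \ W).filter (fun x => f x = c)).card :=
    Finset.card_eq_sum_card_fiberwise (fun x _ => Finset.mem_univ (f x))
  have hWIcc : (Finset.Icc 1 n \ W).card = n - k := by
    rw [Finset.card_sdiff_of_subset hWsub, Nat.card_Icc, hWcard]; omega
  have hle : ∑ c : Fin r, ((Finset.Icc 1 n \ W).filter (fun x => f x = c)).card ≤
      ∑ _c : Fin r, (m - 1) := Finset.sum_le_sum (fun c _ => hcls c)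
  have hconst : ∑ _c : Fin r, (m - 1) = r * (m - 1) := by
    rw [Finset.sum_const, Finset.card_univ, Fintype.card_fin, smul_eq_mul]
  have h1 : r * (m - 1) + r * 1 = r * m := by rw [← Nat.mul_add]; congr 1; omega
  have h2 : r * m = m * r := Nat.mul_comm r m
  omega
end

section
/- Let r > s - 1 ≥ 1 and let G be a hypergraph on [n]. If the Kneser hypergraph KG^r(G_{s-stable}) has chromatic number t, then the Kneser hypergraph KG^r(G_{almost s-stable}) has chromatic number at most t + 1. -/
/-- The sub-hypergraph of `G` consisting of its `s`-stable hyperedges (any two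
distinct elements at cyclic distance `≥ s`). -/
def stablePart (n s : ℕ) (G : Finset (Finset ℕ)) : Finset (Finset ℕ) :=
  G.filter (fun e => ∀ x ∈ e, ∀ y ∈ e, x ≠ y → s ≤ cdist n x y)

/-- The sub-hypergraph of `G` consisting of its almost `s`-stable hyperedges (any
two elements `x < y` satisfy `y - x ≥ s`; no wraparound condition). -/
def almostStablePart (s : ℕ) (G : Finset (Finset ℕ)) : Finset (Finset ℕ) :=
  G.filter (fun e => ∀ x ∈ e, ∀ y ∈ e, x < y → s ≤ y - x)

/-- The chromatic number of the Kneser hypergraph `KG^r(H)`: the least `m` such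
that the hyperedges of `H` can be colored with `m` colors so that no `r` pairwise
disjoint hyperedges of `H` all receive the same color. -/
noncomputable def kgChrom (r : ℕ) (H : Finset (Finset ℕ)) : ℕ :=
  sInf {m | ∃ f : Finset ℕ → ℕ, (∀ e ∈ H, f e < m) ∧
    ∀ A : Finset (Finset ℕ), A ⊆ H → A.card = r →
      (∀ e ∈ A, ∀ e' ∈ A, e ≠ e' → Disjoint e e') → ¬ ∃ c, ∀ e ∈ A, f e = c}

/-- An almost `s`-stable set in `[n]` that is not `s`-stable contains an element `< s`. -/
lemma exists_small (n s : ℕ) (e : Finset ℕ) (he : e ⊆ Finset.Icc 1 n)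
    (ha : ∀ x ∈ e, ∀ y ∈ e, x < y → s ≤ y - x)
    (hns : ¬ ∀ x ∈ e, ∀ y ∈ e, x ≠ y → s ≤ cdist n x y) :
    ∃ x ∈ e, x < s := by
  push_neg at hns
  obtain ⟨x, hx, y, hy, hxy, hc⟩ := hns
  rcases lt_or_gt_of_ne hxy with h | h
  · have h1 := ha x hx y hy h
    have hyn : y ≤ n := (Finset.mem_Icc.mp (he hy)).2
    unfold cdist at hc
    refine ⟨x, hx, ?_⟩
    omega
  · have h1 := ha y hy x hx h
    have hxn : x ≤ n := (Finset.mem_Icc.mp (he hx)).2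
    unfold cdist at hc
    refine ⟨y, hy, ?_⟩
    omega

/-- Let `r > s - 1 ≥ 1` and `G` a hypergraph on `[n]`. If `χ(KG^r(G_{s-stable})) = t`,
then `χ(KG^r(G_{almost s-stable})) ≤ t + 1`. -/
theorem stmt_18 (n r s t : ℕ) (hs : 2 ≤ s) (hr : s - 1 < r)
    (G : Finset (Finset ℕ)) (hG : ∀ e ∈ G, e ⊆ Finset.Icc 1 n)
    (ht : kgChrom r (stablePart n s G) = t) :
    kgChrom r (almostStablePart s G) ≤ t + 1 := by
  classical
  have hr2 : 2 ≤ r := by omega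
  set H := stablePart n s G with hH
  -- the defining set for H is nonempty: injective coloring
  have hne : {m | ∃ f : Finset ℕ → ℕ, (∀ e ∈ H, f e < m) ∧
      ∀ A : Finset (Finset ℕ), A ⊆ H → A.card = r →
        (∀ e ∈ A, ∀ e' ∈ A, e ≠ e' → Disjoint e e') → ¬ ∃ c, ∀ e ∈ A, f e = c}.Nonempty := by
    refine ⟨H.card, fun e => H.toList.idxOf e, ?_, ?_⟩
    · intro e hee
      have : e ∈ H.toList := Finset.mem_toList.mpr hee
      simpa [Finset.length_toList] using List.idxOf_lt_length_iff.mpr this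
    · intro A hA hAcard _ ⟨c, hc⟩
      obtain ⟨a, ha, b, hb, hab⟩ := Finset.one_lt_card.mp (by omega : 1 < A.card)
      have hal : a ∈ H.toList := Finset.mem_toList.mpr (hA ha)
      have hbl : b ∈ H.toList := Finset.mem_toList.mpr (hA hb)
      have : a = b := by
        have h1 := hc a ha
        have h2 := hc b hb
        have := h1.trans h2.symm
        have := (List.idxOf_inj (y := b) hal) |>.mp this
        exact this
      exact hab this
  have htmem : t ∈ {m | ∃ f : Finset ℕ → ℕ, (∀ e ∈ H, f e < m) ∧
      ∀ A : Finset (Finset ℕ), A ⊆ H → A.card = r →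
        (∀ e ∈ A, ∀ e' ∈ A, e ≠ e' → Disjoint e e') → ¬ ∃ c, ∀ e ∈ A, f e = c} := by
    rw [← ht]
    exact Nat.sInf_mem hne
  obtain ⟨f, hf1, hf2⟩ := htmem
  -- build the new coloring
  set g : Finset ℕ → ℕ := fun e =>
    if ∀ x ∈ e, ∀ y ∈ e, x ≠ y → s ≤ cdist n x y then f e else t with hg
  apply Nat.sInf_le
  refine ⟨g, ?_, ?_⟩
  · intro e hee
    have heG : e ∈ G := (Finset.mem_filter.mp hee).1
    by_cases hstab : ∀ x ∈ e, ∀ y ∈ e, x ≠ y → s ≤ cdist n x y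
    · have : e ∈ H := Finset.mem_filter.mpr ⟨heG, hstab⟩
      have := hf1 e this
      simp only [hg, if_pos hstab]
      omega
    · simp only [hg, if_neg hstab]
      omega
  · rintro A hA hAcard hdisj ⟨c, hc⟩
    by_cases hall : ∀ e ∈ A, ∀ x ∈ e, ∀ y ∈ e, x ≠ y → s ≤ cdist n x y
    · -- all stable: contradiction with f
      have hAH : A ⊆ H := by
        intro e he
        exact Finset.mem_filter.mpr ⟨(Finset.mem_filter.mp (hA he)).1, hall e he⟩
      refine hf2 A hAH hAcard hdisj ⟨c, ?_⟩
      intro e he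
      have := hc e he
      simpa [hg, if_pos (hall e he)] using this
    · -- some non-stable edge: c = t, so all edges non-stable
      have hex : ∃ e ∈ A, ¬ ∀ x ∈ e, ∀ y ∈ e, x ≠ y → s ≤ cdist n x y := by
        by_contra h
        push_neg at h
        exact hall h
      obtain ⟨e0, he0, hns0⟩ := hex
      have hct : c = t := by
        have := hc e0 he0
        simpa [hg, if_neg hns0] using this.symm
      have hallns : ∀ e ∈ A, ¬ ∀ x ∈ e, ∀ y ∈ e, x ≠ y → s ≤ cdist n x y := by
        intro e he hstab
        have h1 := hc e he
        simp only [hg, if_pos hstab] at h1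
        have heG : e ∈ G := (Finset.mem_filter.mp (hA he)).1
        have := hf1 e (Finset.mem_filter.mpr ⟨heG, hstab⟩)
        omega
      -- each edge has a witness < s; witnesses injective ⇒ r ≤ s-1
      have hw : ∀ e ∈ A, ∃ x ∈ e, x ∈ Finset.Icc 1 (s - 1) := by
        intro e he
        have heA := Finset.mem_filter.mp (hA he)
        obtain ⟨x, hx, hxs⟩ := exists_small n s e (hG e heA.1) heA.2 (hallns e he)
        have h1 : 1 ≤ x := (Finset.mem_Icc.mp (hG e heA.1 hx)).1
        exact ⟨x, hx, Finset.mem_Icc.mpr ⟨h1, by omega⟩⟩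
      choose w hw1 hw2 using hw
      have : A.card ≤ (Finset.Icc 1 (s - 1)).card := by
        apply Finset.card_le_card_of_injOn (fun e => if h : e ∈ A then w e h else 0)
        · intro e he
          simp only [dif_pos he]
          have he2 : e ∈ A := by simpa using he
          simpa [dif_pos he2] using hw2 e he2
        · intro e he e' he' heq
          simp only [Finset.mem_coe] at he he'
          simp only [dif_pos he, dif_pos he'] at heq
          by_contra hne
          have hd := hdisj e he e' he' hne
          exact (Finset.disjoint_left.mp hd (hw1 e he)) (heq ▸ hw1 e' he')
      rw [hAcard, Nat.card_Icc] at this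
      omega
end
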